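/- Let G = (V, E) be a connected finite simple graph, let a, b ∈ V, let v_1, …, v_n ∉ V be n ≥ 2 new distinct vertices, and let G' = (V ∪ {v_1,…,v_n}, E ∪ {{a,v_1}, {v_1,v_2}, …, {v_{n-1},v_n}, {v_n,b}}) be the graph obtained by adding the path a, v_1, …, v_n, b. Then α(G') ≥ 5·α(G). -/

import Mathlib

open SimpleGraph

/-- The number of edge covers of a finite simple graph: subsets `E'` of the edge set
such that every vertex is incident to at least one edge of `E'`. -/
noncomputable def edgeCoverCount {V : Type*} (G : SimpleGraph V) : ℕ :=
  {E' : Set (Sym2 V) | E' ⊆ G.edgeSet ∧ ∀ v : V, ∃ e ∈ E', v ∈ e}.ncard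

lemma count_aux {α β : Type*} [Finite α] [Finite β] (A : Set α) (B : Set β)
    (F : Fin 5 → α → β)
    (hmap : ∀ k, ∀ x ∈ A, F k x ∈ B)
    (hinj : ∀ k k', ∀ x ∈ A, ∀ x' ∈ A, F k x = F k' x' → k = k' ∧ x = x') :
    5 * A.ncard ≤ B.ncard := by
  classical
  have h1 : Set.InjOn (fun p : Fin 5 × α => F p.1 p.2)
      ((Set.univ : Set (Fin 5)) ×ˢ A) := by
    rintro ⟨k, x⟩ ⟨-, hx⟩ ⟨k', x'⟩ ⟨-, hx'⟩ h
    obtain ⟨h1, h2⟩ := hinj k k' x hx x' hx' h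
    simp [h1, h2]
  have h2 : (fun p : Fin 5 × α => F p.1 p.2) '' ((Set.univ : Set (Fin 5)) ×ˢ A) ⊆ B := by
    rintro y ⟨⟨k, x⟩, ⟨-, hx⟩, rfl⟩
    exact hmap k x hx
  have hprod : ((Set.univ : Set (Fin 5)) ×ˢ A).ncard = 5 * A.ncard := by
    rw [← Nat.card_coe_set_eq, Nat.card_congr (Equiv.Set.prod _ _), Nat.card_prod,
      Nat.card_coe_set_eq, Nat.card_coe_set_eq, Set.ncard_univ]
    simp
  calc 5 * A.ncard = ((Set.univ : Set (Fin 5)) ×ˢ A).ncard := hprod.symm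
    _ = ((fun p : Fin 5 × α => F p.1 p.2) '' ((Set.univ : Set (Fin 5)) ×ˢ A)).ncard :=
        (Set.ncard_image_of_injOn h1).symm
    _ ≤ B.ncard := Set.ncard_le_ncard h2 (Set.toFinite B)

/-- Adding a path `a, v₁, …, vₙ, b` of `n ≥ 2` new vertices (the elements of `Fin n`,
as the right summand of `V ⊕ Fin n`) joining two existing vertices `a` and `b` of a
connected finite simple graph at least quintuples the number of edge covers. -/
theorem edgeCoverCount_add_path {V : Type*} [Fintype V] (G : SimpleGraph V)
    (hG : G.Connected) (a b : V) (n : ℕ) (hn : 2 ≤ n) :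
    5 * edgeCoverCount G ≤
      edgeCoverCount (SimpleGraph.fromEdgeSet
        ((Sym2.map (Sum.inl : V → V ⊕ Fin n)) '' G.edgeSet ∪
          {e : Sym2 (V ⊕ Fin n) | ∃ i j : Fin n, (i : ℕ) + 1 = (j : ℕ) ∧
            e = s(Sum.inr i, Sum.inr j)} ∪
          {s(Sum.inl a, Sum.inr (⟨0, by omega⟩ : Fin n)),
            s(Sum.inr (⟨n - 1, by omega⟩ : Fin n), Sum.inl b)})) := by
  classical
  set p0 : Sym2 (V ⊕ Fin n) := s(Sum.inl a, Sum.inr (⟨0, by omega⟩ : Fin n)) with hp0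
  set pn : Sym2 (V ⊕ Fin n) := s(Sum.inr (⟨n - 1, by omega⟩ : Fin n), Sum.inl b) with hpn
  set e01 : Sym2 (V ⊕ Fin n) :=
    s(Sum.inr (⟨0, by omega⟩ : Fin n), Sum.inr (⟨1, by omega⟩ : Fin n)) with he01
  set I : Set (Sym2 (V ⊕ Fin n)) :=
    {e | ∃ i j : Fin n, (i : ℕ) + 1 = (j : ℕ) ∧ e = s(Sum.inr i, Sum.inr j)} with hI
  set Efull : Set (Sym2 (V ⊕ Fin n)) :=
    (Sym2.map (Sum.inl : V → V ⊕ Fin n)) '' G.edgeSet ∪ I ∪ {p0, pn} with hEfull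
  set P : Set (Sym2 (V ⊕ Fin n)) := I ∪ {p0, pn} with hP
  set T : Fin 5 → Set (Sym2 (V ⊕ Fin n)) := ![∅, {p0}, {pn}, {p0, pn}, {e01}] with hT
  set S : Fin 5 → Set (Sym2 (V ⊕ Fin n)) := fun k => P \ T k with hS
  have hT2 : T 2 = {pn} := by simp [hT]
  have hT3 : T 3 = {p0, pn} := by simp [hT]
  rw [edgeCoverCount, edgeCoverCount]
  -- basic distinctness facts
  have hinr_ne_p0 : ∀ i j : Fin n, s(Sum.inr i, Sum.inr j) ≠ p0 := by
    intro i j h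
    rw [hp0, Sym2.eq_iff] at h
    rcases h with ⟨h, -⟩ | ⟨-, h⟩ <;> exact absurd h (by simp)
  have hinr_ne_pn : ∀ i j : Fin n, s(Sum.inr i, Sum.inr j) ≠ pn := by
    intro i j h
    rw [hpn, Sym2.eq_iff] at h
    rcases h with ⟨-, h⟩ | ⟨h, -⟩ <;> exact absurd h (by simp)
  have hne1 : p0 ≠ pn := by
    intro h
    rw [hp0, hpn, Sym2.eq_iff] at h
    rcases h with ⟨h, -⟩ | ⟨-, h⟩
    · exact absurd h (by simp)
    · rw [Sum.inr.injEq, Fin.mk.injEq] at h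
      omega
  have hne2 : p0 ≠ e01 := fun h => hinr_ne_p0 _ _ h.symm
  have hne3 : pn ≠ e01 := fun h => hinr_ne_pn _ _ h.symm
  -- membership in P
  have hp0P : p0 ∈ P := Or.inr (Or.inl rfl)
  have hpnP : pn ∈ P := Or.inr (Or.inr rfl)
  have he01P : e01 ∈ P := Or.inl ⟨⟨0, by omega⟩, ⟨1, by omega⟩, rfl, rfl⟩
  have hTsub : ∀ k, T k ⊆ {p0, pn, e01} := by
    intro k x hx
    fin_cases k <;> simp only [hT, Matrix.cons_val_zero, Matrix.cons_val_one] at hx <;>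
      simp_all <;> tauto
  -- the S k's are pairwise distinguished
  have hp0S : ∀ k : Fin 5, (p0 ∈ S k ↔ ¬(k = 1 ∨ k = 3)) := by
    intro k
    fin_cases k <;> simp [hS, hT, hp0P, hne1, hne2]
  have hpnS : ∀ k : Fin 5, (pn ∈ S k ↔ ¬(k = 2 ∨ k = 3)) := by
    intro k
    fin_cases k <;> simp [hS, hT, hpnP, Ne.symm hne1, hne3]
  have he01S : ∀ k : Fin 5, (e01 ∈ S k ↔ ¬(k = 4)) := by
    intro k
    fin_cases k <;> simp [hS, hT, he01P, Ne.symm hne2, Ne.symm hne3]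
  have hdec : ∀ k k' : Fin 5, (¬(k = 1 ∨ k = 3) ↔ ¬(k' = 1 ∨ k' = 3)) →
      (¬(k = 2 ∨ k = 3) ↔ ¬(k' = 2 ∨ k' = 3)) → (¬(k = 4) ↔ ¬(k' = 4)) → k = k' := by
    decide
  have hSinj : ∀ k k' : Fin 5, S k = S k' → k = k' := by
    intro k k' h
    exact hdec k k' (by rw [← hp0S, ← hp0S, h]) (by rw [← hpnS, ← hpnS, h])
      (by rw [← he01S, ← he01S, h])
  -- edges touching the new vertices
  set R : Set (Sym2 (V ⊕ Fin n)) := {e | ∃ x : Fin n, Sum.inr x ∈ e} with hR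
  have hPR : P ⊆ R := by
    rintro e (⟨i, j, hij, rfl⟩ | he)
    · exact ⟨i, by simp⟩
    · rcases he with rfl | rfl
      · exact ⟨⟨0, by omega⟩, by rw [hp0]; simp⟩
      · exact ⟨⟨n - 1, by omega⟩, by rw [hpn]; simp⟩
  have hImgR : ∀ C : Set (Sym2 V),
      Disjoint ((Sym2.map (Sum.inl : V → V ⊕ Fin n)) '' C) R := by
    intro C
    rw [Set.disjoint_left]
    rintro e ⟨e₀, -, rfl⟩ ⟨x, hx⟩
    rw [Sym2.mem_map] at hx
    obtain ⟨z, -, hz⟩ := hx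
    exact absurd hz (by simp)
  -- the map
  set F : Fin 5 → Set (Sym2 V) → Set (Sym2 (V ⊕ Fin n)) :=
    fun k C => (Sym2.map (Sum.inl : V → V ⊕ Fin n)) '' C ∪ S k with hF
  -- splitting
  have hsplit1 : ∀ k C, F k C ∩ R = S k := by
    intro k C
    apply Set.Subset.antisymm
    · rintro e ⟨he | he, heR⟩
      · exact absurd heR ((Set.disjoint_left.mp (hImgR C)) he)
      · exact he
    · intro e he
      exact ⟨Or.inr he, hPR he.1⟩
  have hsplit2 : ∀ k C, F k C \ R = (Sym2.map (Sum.inl : V → V ⊕ Fin n)) '' C := by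
    intro k C
    apply Set.Subset.antisymm
    · rintro e ⟨he | he, heR⟩
      · exact he
      · exact absurd (hPR he.1) heR
    · intro e he
      exact ⟨Or.inl he, (Set.disjoint_left.mp (hImgR C)) he⟩
  apply count_aux _ _ F
  · -- maps covers to covers
    rintro k C ⟨hC1, hC2⟩
    constructor
    · -- subset of edge set
      rw [edgeSet_fromEdgeSet]
      rintro e (⟨e₀, he₀, rfl⟩ | ⟨heP, -⟩)
      · refine ⟨Or.inl (Or.inl ⟨e₀, hC1 he₀, rfl⟩), ?_⟩
        simp only [Sym2.mem_diagSet, Sym2.isDiag_map Sum.inl_injective]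
        exact G.not_isDiag_of_mem_edgeSet (hC1 he₀)
      · constructor
        · rcases heP with hI' | hpp
          · exact Or.inl (Or.inr hI')
          · exact Or.inr hpp
        · -- not diag
          rcases heP with ⟨i, j, hij, rfl⟩ | (rfl | rfl)
          · simp only [Sym2.mem_diagSet, Sym2.isDiag_iff_proj_eq]
            intro h
            have : i = j := Sum.inr_injective h
            omega
          · rw [hp0]; simp
          · rw [hpn]; simp
    · -- covers every vertex
      rintro (v | i)
      · obtain ⟨e, he, hv⟩ := hC2 v
        exact ⟨Sym2.map Sum.inl e, Or.inl ⟨e, he, rfl⟩, Sym2.mem_map.mpr ⟨v, hv, rfl⟩⟩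
      · -- new vertex i
        rcases Nat.lt_or_ge ((i : ℕ) + 1) n with hi | hi
        · by_cases h0 : (i : ℕ) = 0
          · have hieq : i = ⟨0, by omega⟩ := Fin.ext h0
            by_cases hk : k = 4
            · refine ⟨p0, Or.inr ((hp0S k).mpr ?_), ?_⟩
              · subst hk; decide
              · rw [hp0, Sym2.mem_iff]; exact Or.inr (congrArg Sum.inr hieq)
            · refine ⟨e01, Or.inr ((he01S k).mpr hk), ?_⟩
              rw [he01, Sym2.mem_iff]; exact Or.inl (congrArg Sum.inr hieq)
          · refine ⟨s(Sum.inr i, Sum.inr ⟨(i : ℕ) + 1, hi⟩),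
              Or.inr ⟨Or.inl ⟨i, ⟨(i : ℕ) + 1, hi⟩, rfl, rfl⟩, ?_⟩, by simp⟩
            intro hmem
            rcases hTsub k hmem with h | h | h
            · exact hinr_ne_p0 _ _ h
            · exact hinr_ne_pn _ _ h
            · rw [Set.mem_singleton_iff, he01, Sym2.eq_iff] at h
              rcases h with ⟨h1, -⟩ | ⟨-, h2⟩
              · exact h0 (congrArg Fin.val (Sum.inr_injective h1))
              · have := congrArg Fin.val (Sum.inr_injective h2)
                simp at this
        · -- i = n - 1
          have hival : (i : ℕ) = n - 1 := by have := i.isLt; omega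
          have hieq : i = ⟨n - 1, by omega⟩ := Fin.ext hival
          by_cases hk : k = 2 ∨ k = 3
          · refine ⟨s(Sum.inr ⟨n - 2, by omega⟩, Sum.inr ⟨n - 1, by omega⟩),
              Or.inr ⟨Or.inl ⟨⟨n - 2, by omega⟩, ⟨n - 1, by omega⟩, by simp; omega, rfl⟩, ?_⟩,
              by rw [Sym2.mem_iff]; exact Or.inr (congrArg Sum.inr hieq)⟩
            intro hmem
            rcases hk with rfl | rfl
            · rw [hT2, Set.mem_singleton_iff] at hmem
              exact hinr_ne_pn _ _ hmem
            · rw [hT3] at hmem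
              simp only [Set.mem_insert_iff, Set.mem_singleton_iff] at hmem
              rcases hmem with hmem | hmem
              · exact hinr_ne_p0 _ _ hmem
              · exact hinr_ne_pn _ _ hmem
          · refine ⟨pn, Or.inr ((hpnS k).mpr hk), ?_⟩
            rw [hpn, Sym2.mem_iff]; exact Or.inl (congrArg Sum.inr hieq)
  · -- injectivity
    rintro k k' C ⟨hC1, -⟩ C' ⟨hC1', -⟩ h
    have hSS : S k = S k' := by rw [← hsplit1 k C, ← hsplit1 k' C', h]
    have hCC : (Sym2.map (Sum.inl : V → V ⊕ Fin n)) '' C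
        = (Sym2.map (Sum.inl : V → V ⊕ Fin n)) '' C' := by
      rw [← hsplit2 k C, ← hsplit2 k' C', h]
    exact ⟨hSinj k k' hSS,
      Set.image_injective.mpr (Sym2.map.injective Sum.inl_injective) hCC⟩
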